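/- Let n ≥ 1 and let Y : ℝ × ℝⁿ → ℝⁿ be twice continuously differentiable with det( I + ∇Y(t,y) ) = 1 for all (t,y) ∈ ℝ × ℝⁿ, where (∇Y(t,y))_{ij} = ∂_j Y_i(t,y) is the spatial Jacobian. Set f := Y(0,·) and g := ∂_t Y(0,·). Then for every y ∈ ℝⁿ the matrix I + ∇f(y) is invertible and tr( (I + ∇f(y))^{−1} · ∇g(y) ) = 0, where (∇f)_{ij} = ∂_j f_i and (∇g)_{ij} = ∂_j g_i. -/

import Mathlib

/-- Time derivative `∂_t u` of a function `u : ℝ × ℝⁿ → ℝ`. -/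
noncomputable def pt {n : ℕ} (u : ℝ × (Fin n → ℝ) → ℝ) (q : ℝ × (Fin n → ℝ)) : ℝ :=
  fderiv ℝ u q (1, 0)

/-- Spatial partial derivative `∂_j u` of a function `u : ℝ × ℝⁿ → ℝ`. -/
noncomputable def ps {n : ℕ} (j : Fin n) (u : ℝ × (Fin n → ℝ) → ℝ) (q : ℝ × (Fin n → ℝ)) : ℝ :=
  fderiv ℝ u q (0, Pi.single j 1)

/-- The determinant as a continuous multilinear map in the rows. -/
noncomputable def detCML (n : ℕ) :
    ContinuousMultilinearMap ℝ (fun _ : Fin n => (Fin n → ℝ)) ℝ :=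
  MultilinearMap.mkContinuous
    (Matrix.detRowAlternating (R := ℝ) (n := Fin n)).toMultilinearMap ((n.factorial : ℝ)) (by
      intro m
      have hm : (Matrix.detRowAlternating (R := ℝ) (n := Fin n)).toMultilinearMap m
          = (Matrix.of m).det := rfl
      rw [hm, Matrix.det_apply]
      refine (norm_sum_le _ _).trans ?_
      have h1 : ∀ σ ∈ (Finset.univ : Finset (Equiv.Perm (Fin n))),
          ‖Equiv.Perm.sign σ • ∏ i, Matrix.of m (σ i) i‖ ≤ ∏ i, ‖m i‖ := by
        intro σ _
        have h2 : ‖Equiv.Perm.sign σ • ∏ i, Matrix.of m (σ i) i‖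
            = ‖∏ i, m (σ i) i‖ := by
          rcases Int.units_eq_one_or (Equiv.Perm.sign σ) with h | h <;>
            simp [h, Matrix.of_apply]
        rw [h2, norm_prod]
        calc ∏ i, ‖m (σ i) i‖ ≤ ∏ i, ‖m (σ i)‖ :=
              Finset.prod_le_prod (fun i _ => norm_nonneg _)
                (fun i _ => norm_le_pi_norm (m (σ i)) i)
          _ = ∏ i, ‖m i‖ := Equiv.prod_comp σ (fun i => ‖m i‖)
      refine (Finset.sum_le_card_nsmul _ _ _ h1).trans ?_
      simp [Fintype.card_perm, nsmul_eq_mul])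

lemma detCML_apply {n : ℕ} (m : Fin n → Fin n → ℝ) : detCML n m = (Matrix.of m).det := by
  simp only [detCML, MultilinearMap.coe_mkContinuous]; rfl

lemma det_updateRow_eq {n : ℕ} (A : Matrix (Fin n) (Fin n) ℝ) (i : Fin n) (b : Fin n → ℝ) :
    (A.updateRow i b).det = ∑ j, b j * A.adjugate j i := by
  rw [← Matrix.cramer_transpose_apply]
  have hb : b = ∑ j, b j • (Pi.single j 1 : Fin n → ℝ) := by
    ext k
    simp [Pi.single_apply, eq_comm]
  conv_lhs => rw [hb]
  rw [map_sum, Finset.sum_apply]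
  refine Finset.sum_congr rfl fun j _ => ?_
  rw [LinearMap.map_smul]
  simp [Matrix.adjugate_def, mul_comm]

/-- Jacobi's formula along a curve of matrices. -/
lemma jacobi_formula {n : ℕ} {A : ℝ → (Fin n → Fin n → ℝ)} {B : Fin n → Fin n → ℝ} {t : ℝ}
    (h : HasDerivAt A B t) :
    HasDerivAt (fun s => (Matrix.of (A s)).det)
      (((Matrix.of (A t)).adjugate * Matrix.of B).trace) t := by
  have h1 := (detCML n).hasFDerivAt (x := A t)
  have h2 := h1.comp_hasDerivAt t h
  have h3 : (fun s => detCML n (A s)) = fun s => (Matrix.of (A s)).det := by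
    funext s; exact detCML_apply _
  rw [Function.comp_def, h3] at h2
  refine h2.congr_deriv (Eq.symm ?_)
  rw [ContinuousMultilinearMap.linearDeriv_apply]
  have h4 : ∀ i, detCML n (Function.update (A t) i (B i))
      = ((Matrix.of (A t)).updateRow i (B i)).det := fun i => detCML_apply _
  simp only [h4, det_updateRow_eq]
  rw [Matrix.trace]
  rw [Finset.sum_comm]
  refine Finset.sum_congr rfl fun j _ => ?_
  simp [Matrix.diag, Matrix.mul_apply, mul_comm]

/-- For a `C²` function, the spatial partial of the time derivative is the time derivative of
the spatial partial (along the time direction). -/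
lemma hasDerivAt_ps_time {n : ℕ} {u : ℝ × (Fin n → ℝ) → ℝ} (hu : ContDiff ℝ 2 u)
    (y : Fin n → ℝ) (j : Fin n) :
    HasDerivAt (fun t : ℝ => ps j u (t, y)) (ps j (pt u) (0, y)) 0 := by
  set F : ℝ × (Fin n → ℝ) → (ℝ × (Fin n → ℝ)) →L[ℝ] ℝ := fderiv ℝ u with hF
  have hF1 : ContDiff ℝ 1 F := hu.fderiv_right (by norm_num)
  have hFd : DifferentiableAt ℝ F (0, y) := (hF1.differentiable one_ne_zero) (0, y)
  set G : (ℝ × (Fin n → ℝ)) →L[ℝ] (ℝ × (Fin n → ℝ)) →L[ℝ] ℝ := fderiv ℝ F (0, y) with hG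
  have hGd : HasFDerivAt F G (0, y) := hFd.hasFDerivAt
  have key : ∀ v : ℝ × (Fin n → ℝ),
      HasFDerivAt (fun q => F q v) ((ContinuousLinearMap.apply ℝ ℝ v).comp G) (0, y) := by
    intro v
    exact (ContinuousLinearMap.apply ℝ ℝ v).hasFDerivAt.comp (0, y) hGd
  have hsym : G (1, 0) (0, Pi.single j 1) = G (0, Pi.single j 1) (1, 0) :=
    second_derivative_symmetric
      (fun q => ((hu.differentiable two_ne_zero) q).hasFDerivAt) hGd _ _
  have hc : HasDerivAt (fun t : ℝ => ((t : ℝ), y)) ((1 : ℝ), (0 : Fin n → ℝ)) 0 :=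
    HasDerivAt.prodMk (hasDerivAt_id (0 : ℝ)) (hasDerivAt_const (0 : ℝ) y)
  have h1 : HasDerivAt (fun t : ℝ => F (t, y) (0, Pi.single j 1))
      (G (1, 0) (0, Pi.single j 1)) 0 := by
    have := (key (0, Pi.single j 1)).comp_hasDerivAt 0 hc
    exact this
  have h2 : ps j (pt u) (0, y) = G (0, Pi.single j 1) (1, 0) := by
    have := (key (1, 0)).fderiv
    show fderiv ℝ (fun q => F q (1, 0)) (0, y) (0, Pi.single j 1) = _
    rw [this]
    simp
  rw [h2, ← hsym]
  exact h1

/-- Compatibility condition for the initial data: if `Y` is `C²` with `det(I + ∇Y) ≡ 1`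
(spatial Jacobian), and `f = Y(0,·)`, `g = ∂_t Y(0,·)`, then `I + ∇f(y)` is invertible and
`tr((I + ∇f(y))⁻¹ · ∇g(y)) = 0` for every `y`. -/
theorem initial_data_compatibility (n : ℕ) (hn : 1 ≤ n)
    (Y : ℝ × (Fin n → ℝ) → Fin n → ℝ) (hY : ContDiff ℝ 2 Y)
    (hdet : ∀ q : ℝ × (Fin n → ℝ),
      ((1 : Matrix (Fin n) (Fin n) ℝ) +
        Matrix.of fun i j => ps j (fun q' => Y q' i) q).det = 1) :
    ∀ y : Fin n → ℝ,
      IsUnit ((1 : Matrix (Fin n) (Fin n) ℝ) +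
        Matrix.of fun i j => ps j (fun q' => Y q' i) (0, y)) ∧
      ((((1 : Matrix (Fin n) (Fin n) ℝ) +
          Matrix.of fun i j => ps j (fun q' => Y q' i) (0, y))⁻¹ *
        Matrix.of fun i j => ps j (fun q' => pt (fun q'' => Y q'' i) q') (0, y)).trace = 0) := by
  intro y
  set A : ℝ → (Fin n → Fin n → ℝ) :=
    fun t i j => (1 : Matrix (Fin n) (Fin n) ℝ) i j + ps j (fun q' => Y q' i) (t, y) with hAdef
  set B : Fin n → Fin n → ℝ :=
    fun i j => ps j (fun q' => pt (fun q'' => Y q'' i) q') (0, y) with hBdef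
  have hA : ∀ t, Matrix.of (A t) =
      (1 : Matrix (Fin n) (Fin n) ℝ) + Matrix.of fun i j => ps j (fun q' => Y q' i) (t, y) := by
    intro t
    ext i j
    simp [hAdef, Matrix.add_apply]
  have hB : Matrix.of B =
      (Matrix.of fun i j => ps j (fun q' => pt (fun q'' => Y q'' i) q') (0, y)) := rfl
  have hAB : HasDerivAt A B 0 := by
    rw [hasDerivAt_pi]
    intro i
    rw [hasDerivAt_pi]
    intro j
    exact (hasDerivAt_ps_time (contDiff_pi.1 hY i) y j).const_add _
  have h1 : HasDerivAt (fun s => (Matrix.of (A s)).det)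
      (((Matrix.of (A 0)).adjugate * Matrix.of B).trace) 0 := jacobi_formula hAB
  have h0 : HasDerivAt (fun s => (Matrix.of (A s)).det) 0 0 := by
    have hconst : (fun s => (Matrix.of (A s)).det) = fun _ => (1 : ℝ) := by
      funext s
      rw [hA s]
      exact hdet (s, y)
    rw [hconst]
    exact hasDerivAt_const 0 1
  have htr : (((Matrix.of (A 0)).adjugate * Matrix.of B).trace) = 0 := h1.unique h0
  have hdet0 : ((1 : Matrix (Fin n) (Fin n) ℝ) +
      Matrix.of fun i j => ps j (fun q' => Y q' i) (0, y)).det = 1 := hdet (0, y)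
  have hunit : IsUnit ((1 : Matrix (Fin n) (Fin n) ℝ) +
      Matrix.of fun i j => ps j (fun q' => Y q' i) (0, y)) := by
    rw [Matrix.isUnit_iff_isUnit_det, hdet0]
    exact isUnit_one
  refine ⟨hunit, ?_⟩
  have hinv : ((1 : Matrix (Fin n) (Fin n) ℝ) +
      Matrix.of fun i j => ps j (fun q' => Y q' i) (0, y))⁻¹ =
      ((1 : Matrix (Fin n) (Fin n) ℝ) +
      Matrix.of fun i j => ps j (fun q' => Y q' i) (0, y)).adjugate := by
    rw [Matrix.inv_def, hdet0]
    simp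
  rw [hinv, ← hA 0, ← hB]
  exact htr
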